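/- With notation as above (s_n, s_∞ defined from increasing sets G_n ↑ G via s_n(x) = ∫_e^x 1_{G_n} ds), let J_n = s_n(I) and J_∞ = s_∞(I) be the image intervals. Then J_n is an increasing sequence of open intervals and ⋃_n J_n = J_∞. -/

import Mathlib

open Filter MeasureTheory Set

namespace Stmt14Aux

lemma fin (ν : Measure ℝ) (a b : ℝ) (s : ℝ → ℝ)
    (hν : ∀ x ∈ Ioo a b, ∀ y ∈ Ioo a b, x ≤ y → ν (Ioc x y) = ENNReal.ofReal (s y - s x))
    (A : Set ℝ) {x y : ℝ} (hx : x ∈ Ioo a b) (hy : y ∈ Ioo a b) (hxy : x ≤ y) :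
    ν (A ∩ Ioc x y) ≠ ⊤ :=
  ne_top_of_le_ne_top (by rw [hν x hx y hy hxy]; exact ENNReal.ofReal_ne_top)
    (measure_mono inter_subset_right)

lemma diff (ν : Measure ℝ) (a b e : ℝ) (he : e ∈ Ioo a b) (s : ℝ → ℝ)
    (hν : ∀ x ∈ Ioo a b, ∀ y ∈ Ioo a b, x ≤ y → ν (Ioc x y) = ENNReal.ofReal (s y - s x))
    (A : Set ℝ) (hA : MeasurableSet A) (f : ℝ → ℝ)
    (hf : ∀ x, (e ≤ x → f x = (ν (A ∩ Ioc e x)).toReal) ∧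
      (x ≤ e → f x = -(ν (A ∩ Ioc x e)).toReal))
    {x y : ℝ} (hx : x ∈ Ioo a b) (hy : y ∈ Ioo a b) (hxy : x ≤ y) :
    f y - f x = (ν (A ∩ Ioc x y)).toReal := by
  have key : ∀ u v w : ℝ, u ∈ Ioo a b → v ∈ Ioo a b → w ∈ Ioo a b → u ≤ v → v ≤ w →
      (ν (A ∩ Ioc u w)).toReal = (ν (A ∩ Ioc u v)).toReal + (ν (A ∩ Ioc v w)).toReal := by
    intro u v w hu hv hw huv hvw
    rw [← Ioc_union_Ioc_eq_Ioc huv hvw, inter_union_distrib_left,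
      measure_union (Disjoint.mono inter_subset_right inter_subset_right (Ioc_disjoint_Ioc_of_le le_rfl))
        (hA.inter measurableSet_Ioc),
      ENNReal.toReal_add (fin ν a b s hν A hu hv huv) (fin ν a b s hν A hv hw hvw)]
  rcases le_total y e with hye | hey
  · rw [(hf y).2 hye, (hf x).2 (hxy.trans hye)]
    have := key x y e hx hy he hxy hye; linarith
  · rcases le_total x e with hxe | hex
    · rw [(hf y).1 hey, (hf x).2 hxe]
      have := key x e y hx he hy hxe hey; linarith
    · rw [(hf y).1 (hex.trans hxy), (hf x).1 hex]
      have := key e x y he hx hy hex hxy; linarith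

lemma mono_dom (ν : Measure ℝ) (a b e : ℝ) (he : e ∈ Ioo a b) (s : ℝ → ℝ)
    (hs : StrictMonoOn s (Ioo a b))
    (hν : ∀ x ∈ Ioo a b, ∀ y ∈ Ioo a b, x ≤ y → ν (Ioc x y) = ENNReal.ofReal (s y - s x))
    (A : Set ℝ) (hA : MeasurableSet A) (f : ℝ → ℝ)
    (hf : ∀ x, (e ≤ x → f x = (ν (A ∩ Ioc e x)).toReal) ∧
      (x ≤ e → f x = -(ν (A ∩ Ioc x e)).toReal))
    {x y : ℝ} (hx : x ∈ Ioo a b) (hy : y ∈ Ioo a b) (hxy : x ≤ y) :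
    0 ≤ f y - f x ∧ f y - f x ≤ s y - s x := by
  rw [diff ν a b e he s hν A hA f hf hx hy hxy]
  refine ⟨ENNReal.toReal_nonneg, ?_⟩
  have h2 := hν x hx y hy hxy
  calc (ν (A ∩ Ioc x y)).toReal
      ≤ (ν (Ioc x y)).toReal :=
        ENNReal.toReal_mono (by rw [h2]; exact ENNReal.ofReal_ne_top)
          (measure_mono inter_subset_right)
    _ = s y - s x := by
        rw [h2, ENNReal.toReal_ofReal (sub_nonneg.2 (hs.monotoneOn hx hy hxy))]

lemma cont (ν : Measure ℝ) (a b e : ℝ) (he : e ∈ Ioo a b) (s : ℝ → ℝ)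
    (hs : StrictMonoOn s (Ioo a b)) (hsc : ContinuousOn s (Ioo a b))
    (hν : ∀ x ∈ Ioo a b, ∀ y ∈ Ioo a b, x ≤ y → ν (Ioc x y) = ENNReal.ofReal (s y - s x))
    (A : Set ℝ) (hA : MeasurableSet A) (f : ℝ → ℝ)
    (hf : ∀ x, (e ≤ x → f x = (ν (A ∩ Ioc e x)).toReal) ∧
      (x ≤ e → f x = -(ν (A ∩ Ioc x e)).toReal)) :
    ContinuousOn f (Ioo a b) := by
  have key : ∀ u ∈ Ioo a b, ∀ v ∈ Ioo a b, |f v - f u| ≤ |s v - s u| := by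
    intro u hu v hv
    rcases le_total u v with huv | hvu
    · obtain ⟨h1, h2⟩ := mono_dom ν a b e he s hs hν A hA f hf hu hv huv
      rw [abs_of_nonneg h1]
      exact h2.trans (le_abs_self _)
    · obtain ⟨h1, h2⟩ := mono_dom ν a b e he s hs hν A hA f hf hv hu hvu
      rw [abs_of_nonpos (by linarith), abs_sub_comm]
      calc -(f v - f u) = f u - f v := by ring
        _ ≤ s u - s v := h2
        _ ≤ |s u - s v| := le_abs_self _
  intro x hx
  have hsx := hsc x hx
  rw [Metric.continuousWithinAt_iff] at hsx ⊢
  intro ε hε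
  obtain ⟨δ, hδ, hδ'⟩ := hsx ε hε
  refine ⟨δ, hδ, fun {y} hy hyd => ?_⟩
  have := hδ' hy hyd
  rw [Real.dist_eq] at this ⊢
  exact lt_of_le_of_lt (key x hx y hy) this

lemma smono (ν : Measure ℝ) (a b e : ℝ) (he : e ∈ Ioo a b) (s : ℝ → ℝ)
    (hν : ∀ x ∈ Ioo a b, ∀ y ∈ Ioo a b, x ≤ y → ν (Ioc x y) = ENNReal.ofReal (s y - s x))
    (A : Set ℝ) (hA : MeasurableSet A)
    (hposA : ∀ c ∈ Ioo a b, ∀ d ∈ Ioo a b, c < d → 0 < ν (A ∩ Ioo c d))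
    (f : ℝ → ℝ)
    (hf : ∀ x, (e ≤ x → f x = (ν (A ∩ Ioc e x)).toReal) ∧
      (x ≤ e → f x = -(ν (A ∩ Ioc x e)).toReal)) :
    StrictMonoOn f (Ioo a b) := by
  intro x hx y hy hxy
  have hd := diff ν a b e he s hν A hA f hf hx hy hxy.le
  have hpos' : 0 < ν (A ∩ Ioc x y) :=
    lt_of_lt_of_le (hposA x hx y hy hxy)
      (measure_mono (inter_subset_inter_right _ Ioo_subset_Ioc_self))
  have : 0 < (ν (A ∩ Ioc x y)).toReal :=
    ENNReal.toReal_pos hpos'.ne' (fin ν a b s hν A hx hy hxy.le)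
  linarith

lemma feq0 (ν : Measure ℝ) (e : ℝ) (A : Set ℝ) (f : ℝ → ℝ)
    (hf : ∀ x, (e ≤ x → f x = (ν (A ∩ Ioc e x)).toReal) ∧
      (x ≤ e → f x = -(ν (A ∩ Ioc x e)).toReal)) : f e = 0 := by
  simp [(hf e).1 le_rfl]

lemma cmp (ν : Measure ℝ) (a b e : ℝ) (he : e ∈ Ioo a b) (s : ℝ → ℝ)
    (hν : ∀ x ∈ Ioo a b, ∀ y ∈ Ioo a b, x ≤ y → ν (Ioc x y) = ENNReal.ofReal (s y - s x))
    (A B : Set ℝ) (hAB : A ⊆ B) (f g : ℝ → ℝ)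
    (hf : ∀ x, (e ≤ x → f x = (ν (A ∩ Ioc e x)).toReal) ∧
      (x ≤ e → f x = -(ν (A ∩ Ioc x e)).toReal))
    (hg : ∀ x, (e ≤ x → g x = (ν (B ∩ Ioc e x)).toReal) ∧
      (x ≤ e → g x = -(ν (B ∩ Ioc x e)).toReal)) :
    ∀ x ∈ Ioo a b, (e ≤ x → 0 ≤ f x ∧ f x ≤ g x) ∧ (x ≤ e → g x ≤ f x ∧ f x ≤ 0) := by
  intro x hx
  constructor
  · intro hex
    rw [(hf x).1 hex, (hg x).1 hex]
    exact ⟨ENNReal.toReal_nonneg,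
      ENNReal.toReal_mono (fin ν a b s hν B he hx hex)
        (measure_mono (inter_subset_inter_left _ hAB))⟩
  · intro hxe
    rw [(hf x).2 hxe, (hg x).2 hxe]
    exact ⟨neg_le_neg (ENNReal.toReal_mono (fin ν a b s hν B hx he hxe)
        (measure_mono (inter_subset_inter_left _ hAB))),
      neg_nonpos.2 ENNReal.toReal_nonneg⟩

lemma img_subset (a b e : ℝ) (he : e ∈ Ioo a b) (f g : ℝ → ℝ)
    (hgc : ContinuousOn g (Ioo a b)) (hge : g e = 0)
    (hcmp : ∀ x ∈ Ioo a b, (e ≤ x → 0 ≤ f x ∧ f x ≤ g x) ∧ (x ≤ e → g x ≤ f x ∧ f x ≤ 0)) :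
    f '' Ioo a b ⊆ g '' Ioo a b := by
  rintro _ ⟨x, hx, rfl⟩
  rcases le_total e x with hex | hxe
  · obtain ⟨h1, h2⟩ := (hcmp x hx).1 hex
    have hsub : Icc e x ⊆ Ioo a b := Icc_subset_Ioo he.1 hx.2
    obtain ⟨z, hz, hz'⟩ := intermediate_value_Icc hex (hgc.mono hsub)
      (by rw [hge]; exact ⟨h1, h2⟩)
    exact ⟨z, hsub hz, hz'⟩
  · obtain ⟨h1, h2⟩ := (hcmp x hx).2 hxe
    have hsub : Icc x e ⊆ Ioo a b := Icc_subset_Ioo hx.1 he.2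
    obtain ⟨z, hz, hz'⟩ := intermediate_value_Icc hxe (hgc.mono hsub)
      (by rw [hge]; exact ⟨h1, h2⟩)
    exact ⟨z, hsub hz, hz'⟩

lemma open_ord (a b : ℝ) (f : ℝ → ℝ)
    (hc : ContinuousOn f (Ioo a b)) (hm : StrictMonoOn f (Ioo a b)) :
    IsOpen (f '' Ioo a b) ∧ OrdConnected (f '' Ioo a b) := by
  have hord : OrdConnected (f '' Ioo a b) := (isPreconnected_Ioo.image f hc).ordConnected
  refine ⟨?_, hord⟩
  rw [isOpen_iff_mem_nhds]
  rintro _ ⟨x, hx, rfl⟩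
  obtain ⟨ha, hb⟩ := hx
  have hx₁ : (a + x) / 2 ∈ Ioo a b := ⟨by linarith, by linarith⟩
  have hx₂ : (x + b) / 2 ∈ Ioo a b := ⟨by linarith, by linarith⟩
  have h1 : f ((a + x) / 2) < f x := hm hx₁ ⟨ha, hb⟩ (by linarith)
  have h2 : f x < f ((x + b) / 2) := hm ⟨ha, hb⟩ hx₂ (by linarith)
  refine Filter.mem_of_superset (Ioo_mem_nhds h1 h2) fun y hy => ?_
  exact hord.out ⟨_, hx₁, rfl⟩ ⟨_, hx₂, rfl⟩ (Ioo_subset_Icc_self hy)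

end Stmt14Aux

open Stmt14Aux

/-- With `s_n` built from increasing characteristic sets `G_n ↑ G`, the image intervals
`J_n = s_n(I)` form an increasing sequence of open intervals whose union is `J_∞ = s_∞(I)`. -/
theorem stmt14 (a b e : ℝ) (hab : a < b) (he : e ∈ Ioo a b)
    (ν : Measure ℝ) [IsLocallyFiniteMeasure ν]
    (s : ℝ → ℝ) (hs : StrictMonoOn s (Ioo a b)) (hsc : ContinuousOn s (Ioo a b))
    (hν : ∀ x ∈ Ioo a b, ∀ y ∈ Ioo a b, x ≤ y → ν (Ioc x y) = ENNReal.ofReal (s y - s x))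
    (G : ℕ → Set ℝ) (Glim : Set ℝ)
    (hGm : ∀ n, MeasurableSet (G n)) (hGI : ∀ n, G n ⊆ Ioo a b)
    (hpos : ∀ n, ∀ c ∈ Ioo a b, ∀ d ∈ Ioo a b, c < d → 0 < ν (G n ∩ Ioo c d))
    (hmono : ∀ n, G n ⊆ G (n + 1)) (hunion : Glim = ⋃ n, G n)
    (sn : ℕ → ℝ → ℝ) (sinf : ℝ → ℝ)
    (hsn : ∀ n x, (e ≤ x → sn n x = (ν (G n ∩ Ioc e x)).toReal) ∧
      (x ≤ e → sn n x = -(ν (G n ∩ Ioc x e)).toReal))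
    (hsinf : ∀ x, (e ≤ x → sinf x = (ν (Glim ∩ Ioc e x)).toReal) ∧
      (x ≤ e → sinf x = -(ν (Glim ∩ Ioc x e)).toReal)) :
    (∀ n, sn n '' Ioo a b ⊆ sn (n + 1) '' Ioo a b) ∧
    (∀ n, IsOpen (sn n '' Ioo a b) ∧ OrdConnected (sn n '' Ioo a b)) ∧
    (⋃ n, sn n '' Ioo a b) = sinf '' Ioo a b := by
  have hGmono : Monotone G := monotone_nat_of_le_succ hmono
  have hGlimm : MeasurableSet Glim := hunion ▸ MeasurableSet.iUnion hGm
  have hGsub : ∀ n, G n ⊆ Glim := fun n => hunion ▸ subset_iUnion G n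
  have hposlim : ∀ c ∈ Ioo a b, ∀ d ∈ Ioo a b, c < d → 0 < ν (Glim ∩ Ioo c d) := fun c hc d hd hcd =>
    lt_of_lt_of_le (hpos 0 c hc d hd hcd)
      (measure_mono (inter_subset_inter_left _ (hGsub 0)))
  have hcontn : ∀ n, ContinuousOn (sn n) (Ioo a b) := fun n =>
    cont ν a b e he s hs hsc hν (G n) (hGm n) (sn n) (hsn n)
  have hcontinf : ContinuousOn sinf (Ioo a b) :=
    cont ν a b e he s hs hsc hν Glim hGlimm sinf hsinf
  have hsmono : ∀ n, StrictMonoOn (sn n) (Ioo a b) := fun n =>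
    smono ν a b e he s hν (G n) (hGm n) (hpos n) (sn n) (hsn n)
  have hsmonoinf : StrictMonoOn sinf (Ioo a b) :=
    smono ν a b e he s hν Glim hGlimm hposlim sinf hsinf
  have hne : ∀ n, sn n e = 0 := fun n => feq0 ν e (G n) (sn n) (hsn n)
  -- pointwise convergence
  have htend : ∀ x ∈ Ioo a b, Tendsto (fun n => sn n x) atTop (nhds (sinf x)) := by
    intro x hx
    rcases le_total e x with hex | hxe
    · have hmeas : Tendsto (fun n => ν (G n ∩ Ioc e x)) atTop (nhds (ν (Glim ∩ Ioc e x))) := by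
        rw [hunion, iUnion_inter]
        exact tendsto_measure_iUnion_atTop fun n m hnm => inter_subset_inter_left _ (hGmono hnm)
      have hfin : ν (Glim ∩ Ioc e x) ≠ ⊤ := fin ν a b s hν Glim he hx hex
      have := (ENNReal.tendsto_toReal hfin).comp hmeas
      rw [(hsinf x).1 hex]
      exact this.congr fun n => ((hsn n x).1 hex).symm
    · have hmeas : Tendsto (fun n => ν (G n ∩ Ioc x e)) atTop (nhds (ν (Glim ∩ Ioc x e))) := by
        rw [hunion, iUnion_inter]
        exact tendsto_measure_iUnion_atTop fun n m hnm => inter_subset_inter_left _ (hGmono hnm)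
      have hfin : ν (Glim ∩ Ioc x e) ≠ ⊤ := fin ν a b s hν Glim hx he hxe
      have := ((ENNReal.tendsto_toReal hfin).comp hmeas).neg
      rw [(hsinf x).2 hxe]
      exact this.congr fun n => ((hsn n x).2 hxe).symm
  refine ⟨?_, ?_, ?_⟩
  · intro n
    exact img_subset a b e he (sn n) (sn (n + 1)) (hcontn (n + 1)) (hne (n + 1))
      (cmp ν a b e he s hν (G n) (G (n + 1)) (hmono n) (sn n) (sn (n + 1)) (hsn n) (hsn (n + 1)))
  · intro n
    exact open_ord a b (sn n) (hcontn n) (hsmono n)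
  · apply subset_antisymm
    · refine iUnion_subset fun n => ?_
      exact img_subset a b e he (sn n) sinf hcontinf
        (feq0 ν e Glim sinf hsinf)
        (cmp ν a b e he s hν (G n) Glim (hGsub n) (sn n) sinf (hsn n) hsinf)
    · rintro _ ⟨x, hx, rfl⟩
      rcases le_total e x with hex | hxe
      · set x' := (x + b) / 2 with hx'def
        have hx' : x' ∈ Ioo a b := ⟨by simp only [hx'def]; linarith [hx.1, hx.2], by
          simp only [hx'def]; linarith [hx.2]⟩
        have hxx' : x < x' := by simp only [hx'def]; linarith [hx.2]
        have hlt : sinf x < sinf x' := hsmonoinf hx hx' hxx'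
        obtain ⟨n, hn⟩ := ((tendsto_order.1 (htend x' hx')).1 _ hlt).exists
        have hnonneg : 0 ≤ sinf x := by
          rw [(hsinf x).1 hex]; exact ENNReal.toReal_nonneg
        have hsub : Icc e x' ⊆ Ioo a b := Icc_subset_Ioo he.1 hx'.2
        obtain ⟨z, hz, hz'⟩ := intermediate_value_Icc (hex.trans hxx'.le)
          ((hcontn n).mono hsub) (show sinf x ∈ Icc (sn n e) (sn n x') by
            rw [hne n]; exact ⟨hnonneg, hn.le⟩)
        exact mem_iUnion.2 ⟨n, z, hsub hz, hz'⟩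
      · set x' := (a + x) / 2 with hx'def
        have hx' : x' ∈ Ioo a b := ⟨by simp only [hx'def]; linarith [hx.1], by
          simp only [hx'def]; linarith [hx.1, hx.2]⟩
        have hxx' : x' < x := by simp only [hx'def]; linarith [hx.1]
        have hlt : sinf x' < sinf x := hsmonoinf hx' hx hxx'
        obtain ⟨n, hn⟩ := ((tendsto_order.1 (htend x' hx')).2 _ hlt).exists
        have hnonpos : sinf x ≤ 0 := by
          rw [(hsinf x).2 hxe]; exact neg_nonpos.2 ENNReal.toReal_nonneg
        have hsub : Icc x' e ⊆ Ioo a b := Icc_subset_Ioo hx'.1 he.2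
        obtain ⟨z, hz, hz'⟩ := intermediate_value_Icc (hxx'.le.trans hxe)
          ((hcontn n).mono hsub) (show sinf x ∈ Icc (sn n x') (sn n e) by
            rw [hne n]; exact ⟨hn.le, hnonpos⟩)
        exact mem_iUnion.2 ⟨n, z, hsub hz, hz'⟩
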